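/- Let Γ₁ be a group, Γ₂ ⊴ Γ₁ normal of finite index, Δ = Γ₁/Γ₂ with projection π, M an abelian group with Δ-action, and V an abelian group. Identify Ind_{Γ₂}^{Γ₁} Hom(M, V) with Hom(ℤ[Δ] ⊗ M, V), where Γ₁ acts on ℤ[Δ] ⊗ M by g·(c ⊗ m) = c·π(g)^{-1} ⊗ m; the diagonal Δ-action d·(c ⊗ m) = dc ⊗ d·m commutes with this Γ₁-action and induces a Δ-action on Ind_{Γ₂}^{Γ₁} Hom(M, V) commuting with Γ₁. Then the Δ-invariants (Ind_{Γ₂}^{Γ₁} Hom(M, V))^Δ are naturally isomorphic, as a Γ₁-module, to Hom(M, V) with Γ₁ acting via (γ·f)(m) = f(π(γ)^{-1}·m). -/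

import Mathlib

/-!
STATEMENT 4.  With Γ₂ = ker π ⊴ Γ₁ of finite index, Δ = Γ₁/Γ₂, M an abelian
group with Δ-action and V an abelian group, identify Ind_{Γ₂}^{Γ₁} Hom(M,V)
with Hom(ℤ[Δ] ⊗ M, V), where Γ₁ acts on ℤ[Δ] ⊗ M by g·(c⊗m) = c·π(g)⁻¹ ⊗ m
and Δ acts diagonally by d·(c⊗m) = dc ⊗ d·m (inducing on Hom the actions
(g·F)(w) = F(g⁻¹·w), (d·F)(w) = F(d⁻¹·w)).  Then evaluation at 1⊗(−) is an
isomorphism from the Δ-invariants onto Hom(M,V), equivariant for the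
Γ₁-action (γ·f)(m) = f(π(γ)⁻¹·m) on Hom(M,V).
-/

open scoped TensorProduct

section Statement4

variable {Γ₁ Δ : Type} [Group Γ₁] [Group Δ]
variable (M V : Type) [AddCommGroup M] [DistribMulAction Δ M] [AddCommGroup V]

/-- `W = ℤ[Δ] ⊗ M` (with `ℤ[Δ]` realized as `Δ →₀ ℤ`). -/
abbrev WMod := (Δ →₀ ℤ) ⊗[ℤ] M

/-- The action of `g ∈ Γ₁` on `W = ℤ[Δ] ⊗ M`: `c ⊗ m ↦ c·π(g)⁻¹ ⊗ m`. -/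
noncomputable def rhoW (π : Γ₁ →* Δ) (g : Γ₁) : WMod (Δ := Δ) M →ₗ[ℤ] WMod (Δ := Δ) M :=
  TensorProduct.map
    (Finsupp.mapDomain.addMonoidHom (fun c : Δ => c * (π g)⁻¹)).toIntLinearMap
    LinearMap.id

/-- The diagonal action of `d ∈ Δ` on `W = ℤ[Δ] ⊗ M`: `c ⊗ m ↦ dc ⊗ d·m`. -/
noncomputable def tauW (d : Δ) : WMod (Δ := Δ) M →ₗ[ℤ] WMod (Δ := Δ) M :=
  TensorProduct.map
    (Finsupp.mapDomain.addMonoidHom (fun c : Δ => d * c)).toIntLinearMap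
    (DistribMulAction.toAddMonoidHom M d).toIntLinearMap

/-- The Δ-invariants of `Hom(ℤ[Δ] ⊗ M, V) ( = Ind_{Γ₂}^{Γ₁} Hom(M,V))`. -/
noncomputable def invHom : AddSubgroup (WMod (Δ := Δ) M →+ V) where
  carrier := {F | ∀ (d : Δ) (w : WMod (Δ := Δ) M), F (tauW M d w) = F w}
  zero_mem' := by intro d w; simp
  add_mem' := by intro F F' hF hF' d w; simp [hF d w, hF' d w]
  neg_mem' := by intro F hF d w; simp [hF d w]

/-- Evaluation `F ↦ (m ↦ F(1 ⊗ m))`, realizing the natural isomorphism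
`(Ind_{Γ₂}^{Γ₁} Hom(M,V))^Δ ≅ Hom(M,V)`. -/
noncomputable def evInv (F : ↥(invHom (Δ := Δ) M V)) : M →+ V :=
  (F : WMod (Δ := Δ) M →+ V).comp
    (((TensorProduct.mk ℤ (Δ →₀ ℤ) M) (Finsupp.single (1 : Δ) 1)).toAddMonoidHom)


/-- On a pure tensor, `tauW` is `single e n ⊗ m ↦ single (d*e) n ⊗ d•m`. -/
lemma tauW_single (d e : Δ) (n : ℤ) (m : M) :
    tauW (Δ := Δ) M d (Finsupp.single e n ⊗ₜ[ℤ] m) =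
      Finsupp.single (d * e) n ⊗ₜ[ℤ] (d • m) := by
  exact (TensorProduct.map_tmul _ _ _ _).trans (by simp [Finsupp.mapDomain_single])

/-- Key computation: an invariant `F` on `single d 1 ⊗ m` equals `evInv F (d⁻¹ • m)`. -/
lemma key_eval (F : ↥(invHom (Δ := Δ) M V)) (d : Δ) (m : M) :
    (F : WMod (Δ := Δ) M →+ V) (Finsupp.single d (1 : ℤ) ⊗ₜ[ℤ] m) =
      evInv M V F (d⁻¹ • m) := by
  have h := F.2 d (Finsupp.single (1 : Δ) (1 : ℤ) ⊗ₜ[ℤ] (d⁻¹ • m))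
  rw [tauW_single] at h
  simp only [mul_one, smul_inv_smul] at h
  rw [h]; rfl

/-- Reconstruction: from `f : M →+ V` build `F : W →+ V` with
`F (single d n ⊗ m) = n • f (d⁻¹ • m)`. -/
noncomputable def mkF (f : M →+ V) : WMod (Δ := Δ) M →+ V :=
  (TensorProduct.lift (Finsupp.lsum ℤ (fun d : Δ =>
    LinearMap.toSpanSingleton ℤ (M →ₗ[ℤ] V)
      (f.toIntLinearMap ∘ₗ (DistribMulAction.toAddMonoidHom M d⁻¹).toIntLinearMap)))).toAddMonoidHom

lemma mkF_single (f : M →+ V) (d : Δ) (n : ℤ) (m : M) :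
    mkF (Δ := Δ) M V f (Finsupp.single d n ⊗ₜ[ℤ] m) = n • f (d⁻¹ • m) := by
  simp [mkF, LinearMap.toSpanSingleton_apply]

lemma mkF_mem (f : M →+ V) : mkF (Δ := Δ) M V f ∈ invHom (Δ := Δ) M V := by
  intro d w
  induction w using TensorProduct.induction_on with
  | zero => simp
  | add x y hx hy => simp only [map_add, hx, hy]
  | tmul c m =>
    induction c using Finsupp.induction_linear with
    | zero => simp [TensorProduct.zero_tmul]
    | add a b ha hb =>
      simp only [TensorProduct.add_tmul, map_add, ha, hb]
    | single e n =>
      rw [tauW_single, mkF_single, mkF_single]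
      congr 2
      rw [mul_inv_rev, mul_smul, inv_smul_smul]

lemma mkF_evInv (F : ↥(invHom (Δ := Δ) M V)) (w : WMod (Δ := Δ) M) :
    mkF (Δ := Δ) M V (evInv M V F) w = (F : WMod (Δ := Δ) M →+ V) w := by
  induction w using TensorProduct.induction_on with
  | zero => simp
  | add x y hx hy => simp only [map_add, hx, hy]
  | tmul c m =>
    induction c using Finsupp.induction_linear with
    | zero => simp [TensorProduct.zero_tmul]
    | add a b ha hb => simp only [TensorProduct.add_tmul, map_add, ha, hb]
    | single e n =>
      rw [mkF_single, ← key_eval]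
      have : Finsupp.single e n = n • Finsupp.single e (1 : ℤ) := by
        simp [Finsupp.smul_single]
      rw [this, ← TensorProduct.smul_tmul', AddMonoidHom.map_zsmul]

theorem statement4 (π : Γ₁ →* Δ) (hπ : Function.Surjective π)
    (hFI : π.ker.FiniteIndex) :
    -- evaluation at `1 ⊗ (−)` is additive and bijective ...
    Function.Bijective (evInv (Δ := Δ) M V)
    ∧ (∀ F F' : ↥(invHom (Δ := Δ) M V), evInv M V (F + F') = evInv M V F + evInv M V F')
    -- ... and Γ₁-equivariant: if F' = g·F (i.e. F' = F ∘ (g⁻¹ acting on W))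
    -- then evInv F' = g·(evInv F), where (γ·f)(m) = f(π(γ)⁻¹ • m):
    ∧ (∀ (F F' : ↥(invHom (Δ := Δ) M V)) (g : Γ₁),
        (∀ w, (F' : WMod (Δ := Δ) M →+ V) w =
          (F : WMod (Δ := Δ) M →+ V) (rhoW M π g⁻¹ w)) →
        ∀ m : M, evInv M V F' m = evInv M V F ((π g)⁻¹ • m)) := by
  refine ⟨⟨?_, ?_⟩, ?_, ?_⟩
  · intro F F' h
    apply Subtype.ext
    apply AddMonoidHom.ext
    intro w
    rw [← mkF_evInv M V F w, ← mkF_evInv M V F' w, h]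
  · intro f
    refine ⟨⟨mkF (Δ := Δ) M V f, mkF_mem M V f⟩, ?_⟩
    apply AddMonoidHom.ext
    intro m
    show mkF (Δ := Δ) M V f (Finsupp.single (1 : Δ) (1 : ℤ) ⊗ₜ[ℤ] m) = f m
    rw [mkF_single]
    simp
  · intro F F'
    rfl
  · intro F F' g h m
    have h1 : evInv M V F' m
        = (F : WMod (Δ := Δ) M →+ V) (rhoW M π g⁻¹ (Finsupp.single (1 : Δ) (1 : ℤ) ⊗ₜ[ℤ] m)) :=
      h _
    rw [h1]
    have h2 : rhoW M π g⁻¹ (Finsupp.single (1 : Δ) (1 : ℤ) ⊗ₜ[ℤ] m)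
        = Finsupp.single (π g) (1 : ℤ) ⊗ₜ[ℤ] m := by
      exact (TensorProduct.map_tmul _ _ _ _).trans (by simp [Finsupp.mapDomain_single])
    rw [h2, key_eval]


end Statement4
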